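/- Let G be a vertex-minimal toroidal graph admitting no proper odd colouring with at most 9 colours. Then G does not contain two adjacent vertices u, v both of degree 5 that have two common neighbours. -/

import Mathlib

open scoped Classical
open Finset

/-- The colouring `c` is *odd at* `v`: some colour appears an odd number of
times in the neighbourhood of `v`. -/
def SimpleGraph.IsOddAt {V α : Type} [Fintype V] (G : SimpleGraph V)
    (c : V → α) (v : V) : Prop :=
  ∃ a : α, Odd ((G.neighborFinset v).filter fun w => c w = a).card

/-- `c` is a proper odd vertex-colouring of `G`. -/
def SimpleGraph.IsProperOdd {V α : Type} [Fintype V] (G : SimpleGraph V)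
    (c : V → α) : Prop :=
  (∀ u w : V, G.Adj u w → c u ≠ c w) ∧
  ∀ v : V, 0 < G.degree v → G.IsOddAt c v

/-- `G` has a proper odd colouring with at most 9 colours. -/
def SimpleGraph.HasNice {V : Type} [Fintype V] (G : SimpleGraph V) : Prop :=
  ∃ c : V → Fin 9, G.IsProperOdd c

lemma zmod2_of_not_odd {n : ℕ} (h : ¬ Odd n) : (n : ZMod 2) = 0 := by
  rw [Nat.not_odd_iff_even] at h; obtain ⟨m, rfl⟩ := h; push_cast
  have h2 : (2 : ZMod 2) = 0 := by decide
  calc (m : ZMod 2) + m = (m:ZMod 2) * 2 := by ring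
  _ = 0 := by rw [h2]; ring

lemma card_filter_erase {α : Type*} [DecidableEq α] (S : Finset α) (z : α) (P : α → Prop)
    [DecidablePred P] :
    (S.filter P).card = ((S.erase z).filter P).card + (if z ∈ S ∧ P z then 1 else 0) := by
  by_cases hz : z ∈ S ∧ P z
  · rw [if_pos hz]
    have h1 : S.filter P = insert z ((S.erase z).filter P) := by
      ext a
      simp only [Finset.mem_filter, Finset.mem_insert, Finset.mem_erase]
      constructor
      · rintro ⟨ha, hPa⟩
        by_cases h : a = z
        · exact Or.inl h
        · exact Or.inr ⟨⟨h, ha⟩, hPa⟩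
      · rintro (rfl | ⟨⟨_, ha⟩, hPa⟩)
        · exact hz
        · exact ⟨ha, hPa⟩
    rw [h1, Finset.card_insert_of_notMem (by simp)]
  · rw [if_neg hz, add_zero]
    congr 1
    ext a
    simp only [Finset.mem_filter, Finset.mem_erase]
    constructor
    · rintro ⟨ha, hPa⟩
      refine ⟨⟨fun h => hz ?_, ha⟩, hPa⟩
      subst h; exact ⟨ha, hPa⟩
    · rintro ⟨⟨_, ha⟩, hPa⟩; exact ⟨ha, hPa⟩

lemma filter_irrel {α : Type*} (s : Finset α) (p : α → Prop) (h1 h2 : DecidablePred p) :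
    @Finset.filter α p h1 s = @Finset.filter α p h2 s := by
  ext z
  simp only [Finset.mem_filter]

lemma exists_odd_fiber {α β : Type*} [DecidableEq β] [Fintype β] (S : Finset α) (f : α → β)
    (h : Odd S.card) : ∃ t, Odd ((S.filter fun z => f z = t).card) := by
  by_contra hc
  push_neg at hc
  have hs := Finset.card_eq_sum_card_fiberwise (f := f) (s := S) (t := Finset.univ)
    (fun x _ => Finset.mem_univ _)
  rw [hs] at h
  rw [← Nat.not_even_iff_odd] at h
  exact h (Finset.even_sum _ (fun t _ => Nat.not_odd_iff_even.mp (hc t)))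

/-- A vertex-minimal toroidal graph with no nice colouring does not contain
two adjacent 5-vertices with two common neighbours. Toroidality is preserved
by edge contraction (delete `v`, join `u` to all former neighbours of `v`). -/
theorem min_counterexample_no_adjacent_five_vertices
    (Toroidal : ∀ (W : Type) [Fintype W] [DecidableEq W], SimpleGraph W → Prop)
    {V : Type} [Fintype V] [DecidableEq V] (G : SimpleGraph V)
    (hG : Toroidal V G)
    (hcontract : ∀ (v u : V) (hvu : G.Adj v u),
      Toroidal {x : V // x ≠ v}
        (SimpleGraph.fromRel fun x y : {x : V // x ≠ v} =>
          G.Adj x.1 y.1 ∨ (x = ⟨u, hvu.ne'⟩ ∧ G.Adj v y.1)))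
    (hno : ¬ G.HasNice)
    (hmin : ∀ (W : Type) [Fintype W] [DecidableEq W] (H : SimpleGraph W),
      Toroidal W H → Fintype.card W < Fintype.card V → H.HasNice) :
    ¬ ∃ u v x y : V, G.Adj u v ∧ G.degree u = 5 ∧ G.degree v = 5 ∧ x ≠ y ∧
      G.Adj u x ∧ G.Adj v x ∧ G.Adj u y ∧ G.Adj v y := by
  rintro ⟨u, v, x, y, huv, hdu, hdv, hxy, hux, hvx, huy, hvy⟩
  have hvu : G.Adj v u := huv.symm
  have hune : u ≠ v := huv.ne
  set H : SimpleGraph {z : V // z ≠ v} :=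
    SimpleGraph.fromRel (fun p q : {z : V // z ≠ v} =>
      G.Adj p.1 q.1 ∨ (p = ⟨u, hvu.ne'⟩ ∧ G.Adj v q.1)) with hHdef
  have hcardlt : Fintype.card {z : V // z ≠ v} < Fintype.card V :=
    Fintype.card_subtype_lt (x := v) (by simp)
  obtain ⟨c', hcp, hco⟩ := hmin _ H (hcontract v u hvu) hcardlt
  have hHadj : ∀ (p q : {z : V // z ≠ v}), H.Adj p q ↔
      p.1 ≠ q.1 ∧ (G.Adj p.1 q.1 ∨ (p.1 = u ∧ G.Adj v q.1) ∨ (q.1 = u ∧ G.Adj v p.1)) := by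
    intro p q
    rw [hHdef, SimpleGraph.fromRel_adj]
    simp only [ne_eq, Subtype.ext_iff]
    constructor
    · rintro ⟨h1, h2⟩
      refine ⟨h1, ?_⟩
      rcases h2 with (h | ⟨h, h'⟩) | (h | ⟨h, h'⟩)
      exacts [Or.inl h, Or.inr (Or.inl ⟨h, h'⟩), Or.inl h.symm, Or.inr (Or.inr ⟨h, h'⟩)]
    · rintro ⟨h1, h2⟩
      refine ⟨h1, ?_⟩
      rcases h2 with h | ⟨h, h'⟩ | ⟨h, h'⟩
      exacts [Or.inl (Or.inl h), Or.inl (Or.inr ⟨h, h'⟩), Or.inr (Or.inr ⟨h, h'⟩)]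
  have hIOAH : ∀ p : {z : V // z ≠ v}, H.IsOddAt c' p →
      ∃ t : Fin 9, Odd (((H.neighborFinset p).filter fun z => c' z = t).card) := by
    intro p hp
    obtain ⟨t, ht⟩ := hp
    exact ⟨t, by convert ht using 3; ext; simp⟩
  -- base colouring pulled back to V
  set c0 : V → Fin 9 := fun w => if h : w = v then 0 else c' ⟨w, h⟩ with hc0def
  have hc0e : ∀ (w : V) (h : w ≠ v), c0 w = c' ⟨w, h⟩ := by
    intro w h; simp [hc0def, h]
  have hprop1 : ∀ s t : V, s ≠ v → t ≠ v → G.Adj s t → c0 s ≠ c0 t := by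
    intro s t hs ht hadj
    rw [hc0e s hs, hc0e t ht]
    exact hcp _ _ ((hHadj ⟨s, hs⟩ ⟨t, ht⟩).2 ⟨hadj.ne, Or.inl hadj⟩)
  have hprop2 : ∀ t : V, (ht : t ≠ v) → G.Adj v t → t ≠ u → c0 u ≠ c0 t := by
    intro t ht hadj htu
    rw [hc0e u hune, hc0e t ht]
    exact hcp _ _ ((hHadj ⟨u, hune⟩ ⟨t, ht⟩).2 ⟨Ne.symm htu, Or.inr (Or.inl ⟨rfl, hadj⟩)⟩)
  -- parity bookkeeping data
  set fA : V → Fin 9 → ZMod 2 := fun w t =>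
    (((((G.neighborFinset w).erase v).erase u).filter fun z => c0 z = t).card : ZMod 2)
    with hfAdef
  set V1 : V → Finset (Fin 9) := fun w =>
    Finset.univ.filter fun β => ∀ t, fA w t + (if t = β then (1:ZMod 2) else 0) = 0 with hV1def
  set V2 : V → Fin 9 → Finset (Fin 9) := fun w b =>
    Finset.univ.filter fun α => α ≠ b ∧
      ∀ t, fA w t + (if t = b then (1:ZMod 2) else 0) + (if t = α then (1:ZMod 2) else 0) = 0
    with hV2def
  have hV1card : ∀ w, (V1 w).card ≤ 1 := by
    intro w
    apply Finset.card_le_one.2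
    intro β hβ β' hβ'
    simp only [hV1def, Finset.mem_filter, Finset.mem_univ, true_and] at hβ hβ'
    have e1 := hβ β
    have e2 := hβ' β
    rw [if_pos rfl] at e1
    by_contra hne
    rw [if_neg (fun hh : β = β' => hne hh), add_zero] at e2
    rw [e2, zero_add] at e1
    exact one_ne_zero e1
  have hV2card : ∀ w b, (V2 w b).card ≤ 1 := by
    intro w b
    apply Finset.card_le_one.2
    intro α hα α' hα'
    simp only [hV2def, Finset.mem_filter, Finset.mem_univ, true_and] at hα hα'
    have e1 := hα.2 α
    have e2 := hα'.2 α
    rw [if_pos rfl] at e1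
    by_contra hne
    rw [if_neg (fun hh : α = α' => hne hh), add_zero] at e2
    rw [e2, zero_add] at e1
    exact one_ne_zero e1
  -- the common/private neighbourhood partition
  set common : Finset V := (G.neighborFinset u) ∩ (G.neighborFinset v) with hcommondef
  set k := common.card with hkdef
  have hxc : x ∈ common := by
    rw [hcommondef, Finset.mem_inter, SimpleGraph.mem_neighborFinset,
      SimpleGraph.mem_neighborFinset]
    exact ⟨hux, hvx⟩
  have hyc : y ∈ common := by
    rw [hcommondef, Finset.mem_inter, SimpleGraph.mem_neighborFinset,
      SimpleGraph.mem_neighborFinset]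
    exact ⟨huy, hvy⟩
  have hk2 : 2 ≤ k := by
    have : ({x, y} : Finset V) ⊆ common := by
      intro z hz
      rcases Finset.mem_insert.1 hz with rfl | hz
      · exact hxc
      · rw [Finset.mem_singleton] at hz; subst hz; exact hyc
    calc 2 = ({x, y} : Finset V).card := (Finset.card_pair hxy).symm
    _ ≤ k := Finset.card_le_card this
  have hNu : (G.neighborFinset u).card = 5 := hdu
  have hNv : (G.neighborFinset v).card = 5 := hdv
  have hvmemNu : v ∈ G.neighborFinset u := (SimpleGraph.mem_neighborFinset _ _ _).2 huv
  have humemNv : u ∈ G.neighborFinset v := (SimpleGraph.mem_neighborFinset _ _ _).2 hvu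
  have hNue : ((G.neighborFinset u).erase v).card = 4 := by
    rw [Finset.card_erase_of_mem hvmemNu, hNu]
  have hNve : ((G.neighborFinset v).erase u).card = 4 := by
    rw [Finset.card_erase_of_mem humemNv, hNv]
  have hsubU : common ⊆ (G.neighborFinset u).erase v := by
    intro z hz
    rw [hcommondef, Finset.mem_inter] at hz
    rw [Finset.mem_erase]
    refine ⟨?_, hz.1⟩
    intro hzv; subst hzv
    exact G.irrefl ((SimpleGraph.mem_neighborFinset _ _ _).1 hz.2)
  have hsubV : common ⊆ (G.neighborFinset v).erase u := by
    intro z hz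
    rw [hcommondef, Finset.mem_inter] at hz
    rw [Finset.mem_erase]
    refine ⟨?_, hz.2⟩
    intro hzu; subst hzu
    exact G.irrefl ((SimpleGraph.mem_neighborFinset _ _ _).1 hz.1)
  set privU : Finset V := ((G.neighborFinset u).erase v) \ common with hprivUdef
  set privV : Finset V := ((G.neighborFinset v).erase u) \ common with hprivVdef
  have hprivUcard : privU.card + k = 4 := by
    rw [hprivUdef, Finset.card_sdiff_add_card_eq_card hsubU, hNue]
  have hprivVcard : privV.card + k = 4 := by
    rw [hprivVdef, Finset.card_sdiff_add_card_eq_card hsubV, hNve]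
  set ForbB : Finset (Fin 9) :=
    ((G.neighborFinset u).erase v).image c0 ∪ privU.biUnion V1 with hForbBdef
  have hForbBcard : ForbB.card + k ≤ 8 := by
    have h1 : ForbB.card ≤ 4 + privU.card := by
      calc ForbB.card ≤ (((G.neighborFinset u).erase v).image c0).card
          + (privU.biUnion V1).card := Finset.card_union_le _ _
      _ ≤ 4 + privU.card := by
          gcongr
          · calc (((G.neighborFinset u).erase v).image c0).card
                ≤ ((G.neighborFinset u).erase v).card := Finset.card_image_le
            _ = 4 := hNue
          · calc (privU.biUnion V1).card ≤ ∑ w ∈ privU, (V1 w).card :=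
                Finset.card_biUnion_le
            _ ≤ ∑ _w ∈ privU, 1 := Finset.sum_le_sum (fun w _ => hV1card w)
            _ = privU.card := by simp
    omega
  -- choose b
  have hbsel : ∃ b : Fin 9, b ∉ ForbB ∧ (∑ w ∈ common, (V2 w b).card) + 1 ≤ k := by
    by_contra hcon
    push_neg at hcon
    set B : Finset (Fin 9) := Finset.univ \ ForbB with hBdef
    have hBcard : B.card + ForbB.card = 9 := by
      rw [hBdef, Finset.card_sdiff_add_card_eq_card (Finset.subset_univ _)]
      simp
    have hBk : k + 1 ≤ B.card := by omega
    have hconB : ∀ b ∈ B, k ≤ ∑ w ∈ common, (V2 w b).card := by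
      intro b hb
      rw [hBdef, Finset.mem_sdiff] at hb
      have := hcon b hb.2
      omega
    have hsum1 : k * B.card ≤ ∑ b ∈ B, ∑ w ∈ common, (V2 w b).card := by
      calc k * B.card = ∑ _b ∈ B, k := by rw [Finset.sum_const, smul_eq_mul, mul_comm]
      _ ≤ _ := Finset.sum_le_sum hconB
    rw [Finset.sum_comm] at hsum1
    have perW : ∀ w ∈ common, ∑ b ∈ B, (V2 w b).card ≤ 2 := by
      intro w _
      by_cases hex : ∃ b0 ∈ B, (V2 w b0).Nonempty
      · obtain ⟨b0, _hb0, a0, ha0⟩ := hex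
        simp only [hV2def, Finset.mem_filter, Finset.mem_univ, true_and] at ha0
        obtain ⟨hab0, heq0⟩ := ha0
        have hmain : ∀ b ∈ B, (V2 w b).card ≤
            (if b = b0 then 1 else 0) + (if b = a0 then 1 else 0) := by
          intro b _
          by_cases hbb0 : b = b0
          · rw [if_pos hbb0]
            calc (V2 w b).card ≤ 1 := hV2card w b
            _ ≤ _ := by omega
          · by_cases hba0 : b = a0
            · rw [if_pos hba0]
              calc (V2 w b).card ≤ 1 := hV2card w b
              _ ≤ _ := by omega
            · rw [if_neg hbb0, if_neg hba0]
              have hemp : V2 w b = ∅ := by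
                apply Finset.eq_empty_iff_forall_notMem.2
                intro α hα
                simp only [hV2def, Finset.mem_filter, Finset.mem_univ, true_and] at hα
                obtain ⟨hαb, heq⟩ := hα
                have e1 := heq0 b
                have e2 := heq b
                rw [if_neg hbb0, if_neg hba0, add_zero, add_zero] at e1
                rw [if_pos rfl, if_neg (fun hh : b = α => hαb hh.symm), add_zero] at e2
                rw [e1, zero_add] at e2
                exact one_ne_zero e2
              rw [hemp]
              simp
        calc ∑ b ∈ B, (V2 w b).card
            ≤ ∑ b ∈ B, ((if b = b0 then 1 else 0) + (if b = a0 then 1 else 0)) :=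
              Finset.sum_le_sum hmain
        _ = (∑ b ∈ B, (if b = b0 then 1 else 0)) + (∑ b ∈ B, (if b = a0 then 1 else 0)) :=
              Finset.sum_add_distrib
        _ ≤ 1 + 1 := by
              gcongr
              · rw [Finset.sum_ite_eq' B b0 (fun _ => 1)]
                split <;> omega
              · rw [Finset.sum_ite_eq' B a0 (fun _ => 1)]
                split <;> omega
        _ = 2 := rfl
      · push_neg at hex
        have : ∀ b ∈ B, (V2 w b).card = 0 := by
          intro b hb
          rw [Finset.card_eq_zero]
          exact hex b hb
        calc ∑ b ∈ B, (V2 w b).card = 0 := Finset.sum_eq_zero this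
        _ ≤ 2 := by omega
    have hsum2 : ∑ w ∈ common, ∑ b ∈ B, (V2 w b).card ≤ 2 * k := by
      calc ∑ w ∈ common, ∑ b ∈ B, (V2 w b).card ≤ ∑ _w ∈ common, 2 :=
          Finset.sum_le_sum perW
      _ = 2 * k := by rw [Finset.sum_const, smul_eq_mul, hkdef, mul_comm]
    have hfin : k * (k + 1) ≤ 2 * k := by
      calc k * (k + 1) ≤ k * B.card := Nat.mul_le_mul_left k hBk
      _ ≤ _ := hsum1
      _ ≤ 2 * k := hsum2
    nlinarith
  obtain ⟨b, hbF, hbsum⟩ := hbsel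
  set ForbA : Finset (Fin 9) := insert b
    ((((G.neighborFinset v).erase u).image c0 ∪ privV.biUnion V1)
      ∪ common.biUnion (fun w => V2 w b)) with hForbAdef
  have hForbAcard : ForbA.card ≤ 8 := by
    have h1 : (((G.neighborFinset v).erase u).image c0).card ≤ 4 := by
      calc (((G.neighborFinset v).erase u).image c0).card
          ≤ ((G.neighborFinset v).erase u).card := Finset.card_image_le
      _ = 4 := hNve
    have h2 : (privV.biUnion V1).card ≤ privV.card := by
      calc (privV.biUnion V1).card ≤ ∑ w ∈ privV, (V1 w).card := Finset.card_biUnion_le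
      _ ≤ ∑ _w ∈ privV, 1 := Finset.sum_le_sum (fun w _ => hV1card w)
      _ = privV.card := by simp
    have h3 : (common.biUnion (fun w => V2 w b)).card ≤ ∑ w ∈ common, (V2 w b).card :=
      Finset.card_biUnion_le
    have h4 : ForbA.card ≤ 1 + ((((G.neighborFinset v).erase u).image c0).card
        + (privV.biUnion V1).card + (common.biUnion (fun w => V2 w b)).card) := by
      calc ForbA.card ≤ _ + 1 := Finset.card_insert_le _ _
      _ ≤ (((G.neighborFinset v).erase u).image c0 ∪ privV.biUnion V1).card
          + (common.biUnion (fun w => V2 w b)).card + 1 := by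
            gcongr
            exact Finset.card_union_le _ _
      _ ≤ (((G.neighborFinset v).erase u).image c0).card + (privV.biUnion V1).card
          + (common.biUnion (fun w => V2 w b)).card + 1 := by
            gcongr
            exact Finset.card_union_le _ _
      _ = _ := by omega
    omega
  have haex : ∃ a : Fin 9, a ∉ ForbA := by
    by_contra hcontra
    push_neg at hcontra
    have : (Finset.univ : Finset (Fin 9)) ⊆ ForbA := fun a _ => hcontra a
    have h9 : (9 : ℕ) ≤ ForbA.card := by
      calc (9:ℕ) = (Finset.univ : Finset (Fin 9)).card := by simp
      _ ≤ ForbA.card := Finset.card_le_card this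
    omega
  obtain ⟨a, haF⟩ := haex
  -- the new colouring
  set c : V → Fin 9 := fun z => if z = v then a else if z = u then b else c0 z with hcdef
  have hcv : c v = a := by simp [hcdef]
  have hcu : c u = b := by simp [hcdef, hune]
  have hcother : ∀ z, z ≠ v → z ≠ u → c z = c0 z := by
    intro z h1 h2; simp [hcdef, h1, h2]
  have hab : a ≠ b := by
    intro h
    exact haF (h ▸ Finset.mem_insert_self b _)
  have hAim : ∀ z, z ∈ (G.neighborFinset v).erase u → a ≠ c0 z := by
    intro z hz heq
    apply haF
    rw [hForbAdef]
    exact Finset.mem_insert_of_mem (Finset.mem_union_left _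
      (Finset.mem_union_left _ (Finset.mem_image.2 ⟨z, hz, heq.symm⟩)))
  have hBim : ∀ z, z ∈ (G.neighborFinset u).erase v → b ≠ c0 z := by
    intro z hz heq
    apply hbF
    rw [hForbBdef]
    exact Finset.mem_union_left _ (Finset.mem_image.2 ⟨z, hz, heq.symm⟩)
  -- the key parity identity
  have hKEY : ∀ (w : V), w ≠ u → w ≠ v → ∀ t : Fin 9,
      (((G.neighborFinset w).filter fun z => c z = t).card : ZMod 2)
      = fA w t + (if G.Adj w u ∧ t = b then 1 else 0)
        + (if G.Adj w v ∧ t = a then 1 else 0) := by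
    intro w hwu hwv t
    set S := G.neighborFinset w with hSdef
    set P : V → Prop := fun z => c z = t with hPdef
    have h1 := card_filter_erase S v P
    have h2 := card_filter_erase (S.erase v) u P
    have h3 : ((S.erase v).erase u).filter P
        = ((S.erase v).erase u).filter (fun z => c0 z = t) := by
      apply Finset.filter_congr
      intro z hz
      simp only [Finset.mem_erase] at hz
      simp [hPdef, hcother z hz.2.1 hz.1]
    have hiv : (if v ∈ S ∧ P v then 1 else 0) = (if G.Adj w v ∧ t = a then (1:ℕ) else 0) := by
      have hPv : P v ↔ t = a := by
        simp only [hPdef, hcv]; exact eq_comm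
      have hvS : v ∈ S ↔ G.Adj w v := by
        rw [hSdef, SimpleGraph.mem_neighborFinset]
      by_cases h1' : G.Adj w v <;> by_cases h2' : t = a <;>
        simp [hPv, hvS, h1', h2']
    have hiu : (if u ∈ S.erase v ∧ P u then 1 else 0)
        = (if G.Adj w u ∧ t = b then (1:ℕ) else 0) := by
      have hPu : P u ↔ t = b := by
        simp only [hPdef, hcu]; exact eq_comm
      have huS : u ∈ S.erase v ↔ G.Adj w u := by
        rw [Finset.mem_erase, hSdef, SimpleGraph.mem_neighborFinset]
        constructor
        · exact fun h => h.2
        · exact fun h => ⟨hune, h⟩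
      by_cases h1' : G.Adj w u <;> by_cases h2' : t = b <;>
        simp [hPu, huS, h1', h2']
    have h4 : (S.filter P).card
        = (((S.erase v).erase u).filter (fun z => c0 z = t)).card
          + (if G.Adj w u ∧ t = b then 1 else 0)
          + (if G.Adj w v ∧ t = a then 1 else 0) := by
      rw [h1, h2, h3, hiv, hiu]
    rw [h4]
    push_cast
    try rw [hfAdef]
    try simp only [apply_ite (fun n : ℕ => (n : ZMod 2)), Nat.cast_one, Nat.cast_zero]
  -- final: G has a nice colouring
  apply hno
  refine ⟨c, ?_, ?_⟩
  · -- properness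
    intro p q hpq
    by_cases hpv : p = v
    · have hpq' : G.Adj v q := by rw [← hpv]; exact hpq
      have hcp' : c p = a := by rw [hpv, hcv]
      by_cases hqu : q = u
      · have hcq' : c q = b := by rw [hqu, hcu]
        rw [hcp', hcq']; exact hab
      · have hqv : q ≠ v := by rintro rfl; exact G.irrefl hpq'
        rw [hcp', hcother q hqv hqu]
        exact hAim q (Finset.mem_erase.2
          ⟨hqu, (SimpleGraph.mem_neighborFinset _ _ _).2 hpq'⟩)
    · by_cases hqv : q = v
      · have hpq' : G.Adj v p := by rw [← hqv]; exact hpq.symm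
        have hcq' : c q = a := by rw [hqv, hcv]
        by_cases hpu : p = u
        · have hcp' : c p = b := by rw [hpu, hcu]
          rw [hcp', hcq']; exact hab.symm
        · rw [hcq', hcother p hpv hpu]
          exact (hAim p (Finset.mem_erase.2
            ⟨hpu, (SimpleGraph.mem_neighborFinset _ _ _).2 hpq'⟩)).symm
      · by_cases hpu : p = u
        · have hpq' : G.Adj u q := by rw [← hpu]; exact hpq
          have hcp' : c p = b := by rw [hpu, hcu]
          have hqu : q ≠ u := by rintro rfl; exact G.irrefl hpq'
          rw [hcp', hcother q hqv hqu]
          exact hBim q (Finset.mem_erase.2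
            ⟨hqv, (SimpleGraph.mem_neighborFinset _ _ _).2 hpq'⟩)
        · by_cases hqu : q = u
          · have hpq' : G.Adj u p := by rw [← hqu]; exact hpq.symm
            have hcq' : c q = b := by rw [hqu, hcu]
            rw [hcq', hcother p hpv hpu]
            exact (hBim p (Finset.mem_erase.2
              ⟨hpv, (SimpleGraph.mem_neighborFinset _ _ _).2 hpq'⟩)).symm
          · rw [hcother p hpv hpu, hcother q hqv hqu]
            exact hprop1 p q hpv hqv hpq
  · -- oddness
    intro w hdegw
    have hIOAG : (∃ t : Fin 9, Odd (((G.neighborFinset w).filter fun z => c z = t).card)) →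
        G.IsOddAt c w := by
      rintro ⟨t, ht⟩
      exact ⟨t, by convert ht using 3⟩
    apply hIOAG
    by_cases hwv : w = v
    · rw [hwv]
      exact exists_odd_fiber _ c (by rw [hNv]; decide)
    · by_cases hwu : w = u
      · rw [hwu]
        exact exists_odd_fiber _ c (by rw [hNu]; decide)
      · by_cases hadju : G.Adj w u <;> by_cases hadjv : G.Adj w v
        · -- common neighbour
          by_contra hfail
          push_neg at hfail
          have hmem : a ∈ V2 w b := by
            rw [hV2def]
            simp only [Finset.mem_filter, Finset.mem_univ, true_and]
            refine ⟨hab, fun t => ?_⟩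
            have h0 : (((G.neighborFinset w).filter fun z => c z = t).card : ZMod 2) = 0 :=
              zmod2_of_not_odd (hfail t)
            have hkey := hKEY w hwu hwv t
            rw [h0] at hkey
            have e1 : (if G.Adj w u ∧ t = b then (1:ZMod 2) else 0)
                = (if t = b then (1:ZMod 2) else 0) := by
              by_cases h : t = b <;> simp [hadju, h]
            have e2 : (if G.Adj w v ∧ t = a then (1:ZMod 2) else 0)
                = (if t = a then (1:ZMod 2) else 0) := by
              by_cases h : t = a <;> simp [hadjv, h]
            rw [e1, e2] at hkey
            exact hkey.symm
          apply haF
          rw [hForbAdef]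
          apply Finset.mem_insert_of_mem
          apply Finset.mem_union_right
          apply Finset.mem_biUnion.2
          refine ⟨w, ?_, hmem⟩
          rw [hcommondef, Finset.mem_inter, SimpleGraph.mem_neighborFinset,
            SimpleGraph.mem_neighborFinset]
          exact ⟨hadju.symm, hadjv.symm⟩
        · -- private neighbour of u
          by_contra hfail
          push_neg at hfail
          have hmem : b ∈ V1 w := by
            rw [hV1def]
            simp only [Finset.mem_filter, Finset.mem_univ, true_and]
            intro t
            have h0 : (((G.neighborFinset w).filter fun z => c z = t).card : ZMod 2) = 0 :=
              zmod2_of_not_odd (hfail t)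
            have hkey := hKEY w hwu hwv t
            rw [h0] at hkey
            have e1 : (if G.Adj w u ∧ t = b then (1:ZMod 2) else 0)
                = (if t = b then (1:ZMod 2) else 0) := by
              by_cases h : t = b <;> simp [hadju, h]
            have e2 : (if G.Adj w v ∧ t = a then (1:ZMod 2) else 0) = 0 := by
              simp [hadjv]
            rw [e1, e2, add_zero] at hkey
            exact hkey.symm
          apply hbF
          rw [hForbBdef]
          apply Finset.mem_union_right
          apply Finset.mem_biUnion.2
          refine ⟨w, ?_, hmem⟩
          rw [hprivUdef, Finset.mem_sdiff]
          constructor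
          · exact Finset.mem_erase.2 ⟨hwv, (SimpleGraph.mem_neighborFinset _ _ _).2 hadju.symm⟩
          · intro hwc
            rw [hcommondef, Finset.mem_inter, SimpleGraph.mem_neighborFinset,
              SimpleGraph.mem_neighborFinset] at hwc
            exact hadjv hwc.2.symm
        · -- private neighbour of v
          by_contra hfail
          push_neg at hfail
          have hmem : a ∈ V1 w := by
            rw [hV1def]
            simp only [Finset.mem_filter, Finset.mem_univ, true_and]
            intro t
            have h0 : (((G.neighborFinset w).filter fun z => c z = t).card : ZMod 2) = 0 :=
              zmod2_of_not_odd (hfail t)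
            have hkey := hKEY w hwu hwv t
            rw [h0] at hkey
            have e1 : (if G.Adj w u ∧ t = b then (1:ZMod 2) else 0) = 0 := by
              simp [hadju]
            have e2 : (if G.Adj w v ∧ t = a then (1:ZMod 2) else 0)
                = (if t = a then (1:ZMod 2) else 0) := by
              by_cases h : t = a <;> simp [hadjv, h]
            rw [e1, e2, add_zero] at hkey
            exact hkey.symm
          apply haF
          rw [hForbAdef]
          apply Finset.mem_insert_of_mem
          apply Finset.mem_union_left
          apply Finset.mem_union_right
          apply Finset.mem_biUnion.2
          refine ⟨w, ?_, hmem⟩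
          rw [hprivVdef, Finset.mem_sdiff]
          constructor
          · exact Finset.mem_erase.2 ⟨hwu, (SimpleGraph.mem_neighborFinset _ _ _).2 hadjv.symm⟩
          · intro hwc
            rw [hcommondef, Finset.mem_inter, SimpleGraph.mem_neighborFinset,
              SimpleGraph.mem_neighborFinset] at hwc
            exact hadju hwc.1.symm
        · -- untouched vertex: transfer oddness from H
          have hw' : w ≠ v := hwv
          have hdegH : 0 < H.degree ⟨w, hw'⟩ := by
            rw [SimpleGraph.degree_pos_iff_exists_adj] at hdegw ⊢
            obtain ⟨z, hz⟩ := hdegw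
            have hzv : z ≠ v := by rintro rfl; exact hadjv hz
            exact ⟨⟨z, hzv⟩, (hHadj ⟨w, hw'⟩ ⟨z, hzv⟩).2 ⟨hz.ne, Or.inl hz⟩⟩
          obtain ⟨t, ht⟩ := hIOAH ⟨w, hw'⟩ (hco ⟨w, hw'⟩ (by convert hdegH))
          refine ⟨t, ?_⟩
          have hcards : ((H.neighborFinset ⟨w, hw'⟩).filter fun z => c' z = t).card
              = ((G.neighborFinset w).filter fun z => c z = t).card := by
            apply Finset.card_bij (fun z _ => z.1)
            · intro z hz
              rw [Finset.mem_filter, SimpleGraph.mem_neighborFinset] at hz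
              obtain ⟨hadj, hct⟩ := hz
              rw [hHadj] at hadj
              obtain ⟨hne', hcase⟩ := hadj
              have hGadj : G.Adj w z.1 := by
                rcases hcase with h | ⟨h, _⟩ | ⟨_, h⟩
                · exact h
                · exact absurd h hwu
                · exact absurd h.symm hadjv
              have hz1u : z.1 ≠ u := by
                intro h; rw [h] at hGadj; exact hadju hGadj
              rw [Finset.mem_filter, SimpleGraph.mem_neighborFinset]
              refine ⟨hGadj, ?_⟩
              rw [hcother z.1 z.2 hz1u, hc0e z.1 z.2]
              exact hct
            · intro z1 h1 z2 h2 h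
              exact Subtype.ext h
            · intro z hz
              rw [Finset.mem_filter, SimpleGraph.mem_neighborFinset] at hz
              obtain ⟨hGadj, hct⟩ := hz
              have hzv : z ≠ v := by rintro rfl; exact hadjv hGadj
              have hzu : z ≠ u := by rintro rfl; exact hadju hGadj
              refine ⟨⟨z, hzv⟩, ?_, rfl⟩
              rw [Finset.mem_filter, SimpleGraph.mem_neighborFinset]
              refine ⟨(hHadj ⟨w, hw'⟩ ⟨z, hzv⟩).2 ⟨hGadj.ne, Or.inl hGadj⟩, ?_⟩
              rw [← hc0e z hzv, ← hcother z hzv hzu]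
              exact hct
          rw [← hcards]
          exact ht
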